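/- Fix an integer B ≥ 2, a vector A ∈ ℝ^B, constants η > 0 and β ≥ 0, and everywhere-positive distributions x_ref, x₀ ∈ Δ^B. Then the minimizer over x ∈ Δ^B of ⟨−A, x⟩ + β·KL(x‖x_ref) + (1/η)·KL(x‖x₀) is the distribution x₁ given by x₁(a) = exp((η·A(a) + ηβ·log x_ref(a) + log x₀(a)) / (1 + ηβ)) / Z, where Z = Σ_{a′ ∈ Fin B} exp((η·A(a′) + ηβ·log x_ref(a′) + log x₀(a′)) / (1 + ηβ)). -/
import Mathlib


open scoped BigOperators

/-- Membership in the probability simplex Δ^B on `Fin B`. -/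
def memSimplex (B : ℕ) (p : Fin B → ℝ) : Prop :=
  (∀ a, 0 ≤ p a) ∧ ∑ a, p a = 1

/-- KL divergence between two distributions on `Fin B`
(with the convention `0 * log 0 = 0`, automatic since `Real.log 0 = 0`). -/
noncomputable def KLd (B : ℕ) (p q : Fin B → ℝ) : ℝ :=
  ∑ a, p a * Real.log (p a / q a)

/-- Gibbs' inequality on the finite simplex. -/
lemma gibbs_aux (B : ℕ) (p q : Fin B → ℝ) (hp : ∀ a, 0 ≤ p a) (hq : ∀ a, 0 < q a)
    (hps : ∑ a, p a = 1) (hqs : ∑ a, q a = 1) :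
    0 ≤ ∑ a, p a * Real.log (p a / q a) := by
  have h : ∀ a : Fin B, p a - q a ≤ p a * Real.log (p a / q a) := by
    intro a
    rcases eq_or_lt_of_le (hp a) with h0 | h0
    · simp [← h0]
      linarith [(hq a).le]
    · have hlog := Real.log_le_sub_one_of_pos (show 0 < q a / p a from div_pos (hq a) h0)
      have hrw : Real.log (p a / q a) = - Real.log (q a / p a) := by
        rw [Real.log_div h0.ne' (hq a).ne', Real.log_div (hq a).ne' h0.ne']; ring
      rw [hrw]
      have := mul_le_mul_of_nonneg_left hlog h0.le
      rw [mul_sub, mul_div_cancel₀ _ h0.ne'] at this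
      nlinarith
  calc (0:ℝ) = ∑ a, (p a - q a) := by rw [Finset.sum_sub_distrib, hps, hqs]; ring
    _ ≤ _ := Finset.sum_le_sum (fun a _ => h a)

theorem stmt8 (B : ℕ) (hB : 2 ≤ B) (A : Fin B → ℝ)
    (η β : ℝ) (hη : 0 < η) (hβ : 0 ≤ β)
    (xref x₀ : Fin B → ℝ)
    (href : memSimplex B xref) (hrefpos : ∀ a, 0 < xref a)
    (hx₀ : memSimplex B x₀) (hx₀pos : ∀ a, 0 < x₀ a) :
    letI Z : ℝ := ∑ a' : Fin B,
      Real.exp ((η * A a' + η * β * Real.log (xref a') + Real.log (x₀ a')) / (1 + η * β))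
    letI x₁ : Fin B → ℝ := fun a =>
      Real.exp ((η * A a + η * β * Real.log (xref a) + Real.log (x₀ a)) / (1 + η * β)) / Z
    memSimplex B x₁ ∧
      ∀ x : Fin B → ℝ, memSimplex B x →
        (∑ a, (-(A a)) * x₁ a) + β * KLd B x₁ xref + (1 / η) * KLd B x₁ x₀
          ≤ (∑ a, (-(A a)) * x a) + β * KLd B x xref + (1 / η) * KLd B x x₀ := by
  set Z : ℝ := ∑ a' : Fin B,
      Real.exp ((η * A a' + η * β * Real.log (xref a') + Real.log (x₀ a')) / (1 + η * β)) with hZdef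
  set x₁ : Fin B → ℝ := fun a =>
      Real.exp ((η * A a + η * β * Real.log (xref a) + Real.log (x₀ a)) / (1 + η * β)) / Z with hx₁def
  set c : ℝ := β + 1 / η with hc_def
  have hc : 0 < c := by positivity
  have hZ : 0 < Z := by
    apply Finset.sum_pos (fun a _ => Real.exp_pos _)
    exact Finset.univ_nonempty_iff.mpr ⟨⟨0, by omega⟩⟩
  have hx₁pos : ∀ a, 0 < x₁ a := fun a => div_pos (Real.exp_pos _) hZ
  have hx₁sum : ∑ a, x₁ a = 1 := by
    show (∑ a, Real.exp _ / Z) = 1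
    rw [← Finset.sum_div]
    exact div_self hZ.ne'
  have hx₁mem : memSimplex B x₁ := ⟨fun a => (hx₁pos a).le, hx₁sum⟩
  have hlogx₁ : ∀ a, Real.log (x₁ a) =
      (A a + β * Real.log (xref a) + (1 / η) * Real.log (x₀ a)) / c - Real.log Z := by
    intro a
    show Real.log (Real.exp _ / Z) = _
    rw [Real.log_div (Real.exp_ne_zero _) hZ.ne', Real.log_exp]
    have hd : (0:ℝ) < 1 + η * β := by positivity
    congr 1
    rw [div_eq_div_iff hd.ne' hc.ne', hc_def]
    field_simp
    ring
  -- key identity: objective(x) = c * KL(x‖x₁) - c * log Z for x in simplex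
  have key : ∀ x : Fin B → ℝ, memSimplex B x →
      (∑ a, (-(A a)) * x a) + β * KLd B x xref + (1 / η) * KLd B x x₀
        = c * (∑ a, x a * Real.log (x a / x₁ a)) - c * Real.log Z := by
    intro x hx
    have hterm : ∀ a : Fin B,
        (-(A a)) * x a + β * (x a * Real.log (x a / xref a))
          + (1 / η) * (x a * Real.log (x a / x₀ a))
        = c * (x a * Real.log (x a / x₁ a)) - c * Real.log Z * x a := by
      intro a
      rcases eq_or_lt_of_le (hx.1 a) with h0 | h0
      · simp [← h0]
      · rw [Real.log_div h0.ne' (hrefpos a).ne', Real.log_div h0.ne' (hx₀pos a).ne',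
          Real.log_div h0.ne' (hx₁pos a).ne', hlogx₁ a, hc_def]
        field_simp
        ring
    calc (∑ a, (-(A a)) * x a) + β * KLd B x xref + (1 / η) * KLd B x x₀
        = ∑ a, ((-(A a)) * x a + β * (x a * Real.log (x a / xref a))
            + (1 / η) * (x a * Real.log (x a / x₀ a))) := by
          simp [KLd, Finset.sum_add_distrib, Finset.mul_sum]
      _ = ∑ a, (c * (x a * Real.log (x a / x₁ a)) - c * Real.log Z * x a) :=
          Finset.sum_congr rfl (fun a _ => hterm a)
      _ = c * (∑ a, x a * Real.log (x a / x₁ a)) - c * Real.log Z := by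
          rw [Finset.sum_sub_distrib, ← Finset.mul_sum, ← Finset.mul_sum, hx.2, mul_one]
  refine ⟨hx₁mem, fun x hx => ?_⟩
  rw [key x hx, key x₁ hx₁mem]
  have h1 : ∑ a, x₁ a * Real.log (x₁ a / x₁ a) = 0 := by
    apply Finset.sum_eq_zero
    intro a _
    rw [div_self (hx₁pos a).ne', Real.log_one, mul_zero]
  rw [h1]
  have h2 := gibbs_aux B x x₁ hx.1 hx₁pos hx.2 hx₁sum
  nlinarith [mul_nonneg hc.le h2]
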